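/- Let M be a popular matching of a marriage instance G = (A ∪ B, E) with witness α ∈ {0, ±1}^(A ∪ B), and assume α_a + α_b = 0 for every edge (a,b) ∈ M. Let A_0, B_0 be the vertices with α-value 0, let A_1, B_1 (resp. A_{−1}, B_{−1}) be the vertices with α-value 1 (resp. −1), let M_0 = {(a,b) ∈ M : α_a = α_b = 0}, M_1 = M ∖ M_0, and let G_1 be the subgraph of G induced on (A ∖ A_0) ∪ (B ∖ B_0). Let S be the stable matching of G_1 computed by the Gale–Shapley algorithm started from the matching M_1 ∩ (A_{−1} × B_1). Then N = M_0 ∪ S is a stable matching of G. -/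

import Mathlib

open scoped Classical

namespace PopMatch

/-- A marriage/roommates instance: a vertex set with a bipartition `A`/`B`
(ignored for roommates instances) and, for each vertex, a strict preference
list over its neighbors (most preferred first).  Adjacency is given by mutual
membership in the preference lists. -/
structure Inst (V : Type*) where
  A : Finset V
  B : Finset V
  plist : V → List V

namespace Inst

variable {V : Type*} [DecidableEq V] [Fintype V]

/-- `u` and `v` are adjacent. -/
def adj (I : Inst V) (u v : V) : Prop := v ∈ I.plist u ∧ u ∈ I.plist v

/-- `u` (strictly) prefers `v` to `w`. -/
def pref (I : Inst V) (u v w : V) : Prop :=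
  v ∈ I.plist u ∧ w ∈ I.plist u ∧ (I.plist u).idxOf v < (I.plist u).idxOf w

/-- Well-formedness of an instance as a marriage instance: preference lists are
duplicate-free and symmetric, and the graph is bipartite with parts `A`, `B`. -/
def IsValid (I : Inst V) : Prop :=
  (∀ v, (I.plist v).Nodup) ∧
  (∀ u v, v ∈ I.plist u ↔ u ∈ I.plist v) ∧
  Disjoint I.A I.B ∧
  (∀ v : V, v ∈ I.A ∨ v ∈ I.B) ∧
  (∀ u v, v ∈ I.plist u → ((u ∈ I.A ∧ v ∈ I.B) ∨ (u ∈ I.B ∧ v ∈ I.A)))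

/-- A matching, encoded by its partner function. -/
def IsMatching (I : Inst V) (p : V → Option V) : Prop :=
  (∀ u v, p u = some v → p v = some u) ∧ (∀ u v, p u = some v → I.adj u v)

/-- The number of matched vertices (twice the number of edges of the matching). -/
def msize (p : V → Option V) : ℕ := (Finset.univ.filter fun u => (p u).isSome).card

/-- Vertex `u` prefers matching `p` to matching `q`. -/
def PrefM (I : Inst V) (p q : V → Option V) (u : V) : Prop :=
  match p u, q u with
  | some _, none => True
  | some v, some w => I.pref u v w
  | none, _ => False

/-- `phi p q` = number of vertices preferring `p` to `q`. -/
noncomputable def phi (I : Inst V) (p q : V → Option V) : ℕ :=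
  (Finset.univ.filter fun u => I.PrefM p q u).card

/-- `delta p q = phi p q - phi q p`. -/
noncomputable def delta (I : Inst V) (p q : V → Option V) : ℤ :=
  (I.phi p q : ℤ) - (I.phi q p : ℤ)

/-- A popular matching: it never loses a head-to-head election. -/
def Popular (I : Inst V) (p : V → Option V) : Prop :=
  I.IsMatching p ∧ ∀ q, I.IsMatching q → 0 ≤ I.delta p q

/-- A dominant matching: a popular matching that beats every larger matching. -/
def Dominant (I : Inst V) (p : V → Option V) : Prop :=
  I.Popular p ∧ ∀ q, I.IsMatching q → msize p < msize q → 0 < I.delta p q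

/-- A maximum-size popular matching. -/
def MaxPopular (I : Inst V) (p : V → Option V) : Prop :=
  I.Popular p ∧ ∀ q, I.Popular q → msize q ≤ msize p

/-- A minimum-size popular matching. -/
def MinPopular (I : Inst V) (p : V → Option V) : Prop :=
  I.Popular p ∧ ∀ q, I.Popular q → msize p ≤ msize q

/-- `u` prefers `v` to its situation in the matching `p`
(an unmatched vertex prefers any neighbor to being unmatched). -/
def PrefOver (I : Inst V) (p : V → Option V) (u v : V) : Prop :=
  match p u with
  | none => True
  | some w => I.pref u v w

/-- The edge `(u,v)` blocks the matching `p`. -/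
def Blocks (I : Inst V) (p : V → Option V) (u v : V) : Prop :=
  I.adj u v ∧ p u ≠ some v ∧ I.PrefOver p u v ∧ I.PrefOver p v u

/-- A stable matching: a matching with no blocking edge. -/
def Stable (I : Inst V) (p : V → Option V) : Prop :=
  I.IsMatching p ∧ ∀ u v, ¬ I.Blocks p u v

/-- Adjacency in the subgraph `G_M` obtained by deleting the edges
labeled `(-,-)` with respect to the matching `p`. -/
def GMAdj (I : Inst V) (p : V → Option V) (u v : V) : Prop :=
  I.adj u v ∧ (p u = some v ∨ I.PrefOver p u v ∨ I.PrefOver p v u)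

/-- `f 0, f 1, …, f n` is an augmenting path with respect to the matching `p`
inside the subgraph `G_M`: an odd number `n` of edges, alternately outside and
inside `p`, with both endpoints unmatched. -/
def IsAugPath (I : Inst V) (p : V → Option V) (n : ℕ) (f : ℕ → V) : Prop :=
  n % 2 = 1 ∧
  (∀ i j, i ≤ n → j ≤ n → f i = f j → i = j) ∧
  (∀ i, i < n → I.GMAdj p (f i) (f (i + 1))) ∧
  (∀ i, i < n → (p (f i) = some (f (i + 1)) ↔ i % 2 = 1)) ∧
  p (f 0) = none ∧ p (f n) = none

/-- `G_M` contains an augmenting path with respect to `p`. -/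
def HasAugPath (I : Inst V) (p : V → Option V) : Prop := ∃ n f, I.IsAugPath p n f

/-- `u` prefers its situation in the matching `p` to `v`. -/
def PrefSit (I : Inst V) (p : V → Option V) (u v : V) : Prop :=
  match p u with
  | none => False
  | some w => I.pref u w v

/-- The weight `wt_p(u,v)` of an edge: `2` for a blocking edge, `-2` for a
`(-,-)` edge, `0` otherwise. -/
noncomputable def wtE (I : Inst V) (p : V → Option V) (u v : V) : ℤ :=
  if I.PrefOver p u v ∧ I.PrefOver p v u then 2
  else if I.PrefSit p u v ∧ I.PrefSit p v u then -2 else 0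

/-- The weight `wt_p(u,u)` of a self-loop. -/
def wtSelf (p : V → Option V) (u : V) : ℤ := if p u = none then 0 else -1

/-- A witness (dual certificate) for the popularity of the matching `p`. -/
def IsWitness (I : Inst V) (p : V → Option V) (α : V → ℤ) : Prop :=
  (∀ u, α u = 0 ∨ α u = 1 ∨ α u = -1) ∧
  (∑ u : V, α u) = 0 ∧
  (∀ u v, I.adj u v → I.wtE p u v ≤ α u + α v) ∧
  (∀ u : V, wtSelf p u ≤ α u)

end Inst

end PopMatch

namespace PopMatch

namespace Inst

variable {V : Type*} [DecidableEq V] [Fintype V]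

/-- One proposal step of the (men-proposing) Gale–Shapley deferred-acceptance
procedure.  The state consists of the current matching and, for every man, the
list of women he has not yet proposed to.  The first unmatched man with a
nonempty remaining list proposes to the top woman on his list; she accepts if
she is unmatched or prefers him to her current partner (rejecting the
latter). Returns `none` when no proposal is possible any more. -/
noncomputable def gsStep (I : Inst V) (men : List V)
    (st : (V → Option V) × (V → List V)) :
    Option ((V → Option V) × (V → List V)) :=
  let p := st.1
  let r := st.2
  match men.find? (fun a => decide (p a = none ∧ r a ≠ [])) with
  | none => none
  | some a =>
    match r a with
    | [] => none
    | b :: rest =>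
      let r' := Function.update r a rest
      match p b with
      | none =>
          some (Function.update (Function.update p a (some b)) b (some a), r')
      | some a' =>
          if I.pref b a a' then
            some (Function.update (Function.update (Function.update p a' none)
                    a (some b)) b (some a), r')
          else some (p, r')

/-- Iterate `gsStep` with the given amount of fuel. -/
noncomputable def gsRun (I : Inst V) (men : List V) :
    ℕ → (V → Option V) × (V → List V) → (V → Option V) × (V → List V)
  | 0, st => st
  | (k + 1), st =>
    match gsStep I men st with
    | none => st
    | some st' => gsRun I men k st'

/-- The matching computed by the men-proposing Gale–Shapley algorithm on the
instance `I`, started from the matching `start` (instead of the empty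
matching): unmatched men propose in decreasing order of preference, and a
woman rejects her current partner whenever she receives a proposal she
prefers. -/
noncomputable def galeShapleyFrom (I : Inst V) (start : V → Option V) :
    V → Option V :=
  (gsRun I I.A.toList ((∑ v : V, (I.plist v).length) + 1)
    (start, fun a => I.plist a)).1

/-- The subinstance of `I` induced on the vertex set `S` (vertices outside `S`
become isolated). -/
noncomputable def induce (I : Inst V) (S : Finset V) : Inst V :=
  ⟨I.A ∩ S, I.B ∩ S,
   fun v => if v ∈ S then (I.plist v).filter (fun w => decide (w ∈ S)) else []⟩

end Inst

/-- The vertex set of the instance `G'`: for each vertex `u` of `G` there are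
three vertices `u⁺ = .inl u`, `u⁻ = .inr (.inl u)` and `d(u) = .inr (.inr u)`. -/
abbrev PV (V : Type*) := V ⊕ (V ⊕ V)

/-- The instance `G'` associated with a marriage instance `G`: every edge
`(a,b)` of `G` is replaced by the two copies `(a⁺,b⁻)` and `(a⁻,b⁺)`, and if
`v₁ ≻ ⋯ ≻ v_k` is `u`'s preference list in `G`, then
`u⁺ : v₁⁻ ≻ ⋯ ≻ v_k⁻ ≻ d(u)`, `u⁻ : d(u) ≻ v₁⁺ ≻ ⋯ ≻ v_k⁺`, and
`d(u) : u⁺ ≻ u⁻`.  Stable matchings of this instance are exactly the stable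
matchings of the bidirected instance `G'`, and they project to dominant
matchings of `G`. -/
noncomputable def primed {V : Type*} [DecidableEq V] (I : Inst V) :
    Inst (PV V) where
  A := I.A.image Sum.inl ∪ I.A.image (fun u => Sum.inr (Sum.inl u)) ∪
        I.B.image (fun u => Sum.inr (Sum.inr u))
  B := I.B.image Sum.inl ∪ I.B.image (fun u => Sum.inr (Sum.inl u)) ∪
        I.A.image (fun u => Sum.inr (Sum.inr u))
  plist := fun x =>
    match x with
    | Sum.inl u =>
        (I.plist u).map (fun v => Sum.inr (Sum.inl v)) ++ [Sum.inr (Sum.inr u)]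
    | Sum.inr (Sum.inl u) => Sum.inr (Sum.inr u) :: (I.plist u).map Sum.inl
    | Sum.inr (Sum.inr u) => [Sum.inl u, Sum.inr (Sum.inl u)]

end PopMatch


set_option linter.unusedSectionVars false

namespace PopMatch

section ListLemmas
variable {α : Type*} [DecidableEq α]

lemma indexOf_filter_lt_iff (p : α → Bool) :
    ∀ (l : List α), l.Nodup → ∀ a b, a ∈ l.filter p → b ∈ l.filter p →
      ((l.filter p).idxOf a < (l.filter p).idxOf b ↔ l.idxOf a < l.idxOf b) := by
  intro l
  induction l with
  | nil => intro _ a b ha; simp at ha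
  | cons x t ih =>
    intro hnd a b ha hb
    have hxt : x ∉ t := (List.nodup_cons.1 hnd).1
    have hndt : t.Nodup := (List.nodup_cons.1 hnd).2
    by_cases hp : p x
    · rw [List.filter_cons_of_pos hp] at ha hb ⊢
      by_cases hax : a = x
      · subst hax
        by_cases hbx : b = a
        · subst hbx; simp
        · have hb' : b ∈ t.filter p := by
            rcases List.mem_cons.1 hb with h | h
            · exact absurd h hbx
            · exact h
          rw [List.idxOf_cons_self, List.idxOf_cons_self,
            List.idxOf_cons_ne _ (by exact fun h => hbx h.symm),
            List.idxOf_cons_ne _ (by exact fun h => hbx h.symm)]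
          simp
      · have ha' : a ∈ t.filter p := by
          rcases List.mem_cons.1 ha with h | h
          · exact absurd h hax
          · exact h
        by_cases hbx : b = x
        · subst hbx
          rw [List.idxOf_cons_self, List.idxOf_cons_self,
            List.idxOf_cons_ne _ (by exact fun h => hax h.symm),
            List.idxOf_cons_ne _ (by exact fun h => hax h.symm)]
          simp
        · have hb' : b ∈ t.filter p := by
            rcases List.mem_cons.1 hb with h | h
            · exact absurd h hbx
            · exact h
          rw [List.idxOf_cons_ne _ (by exact fun h => hax h.symm),
            List.idxOf_cons_ne _ (by exact fun h => hbx h.symm),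
            List.idxOf_cons_ne _ (by exact fun h => hax h.symm),
            List.idxOf_cons_ne _ (by exact fun h => hbx h.symm)]
          simpa using ih hndt a b ha' hb'
    · rw [List.filter_cons_of_neg hp] at ha hb ⊢
      have hat : a ∈ t := List.mem_of_mem_filter ha
      have hbt : b ∈ t := List.mem_of_mem_filter hb
      have hax : a ≠ x := fun h => hxt (h ▸ hat)
      have hbx : b ≠ x := fun h => hxt (h ▸ hbt)
      rw [List.idxOf_cons_ne _ (fun h => hax h.symm),
        List.idxOf_cons_ne _ (fun h => hbx h.symm)]
      simpa using ih hndt a b ha hb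

/-- In a nodup list `l = l1 ++ b :: t`, anything with index bigger than `b`'s lies in `t`. -/
lemma mem_of_indexOf_gt {l l1 t : List α} {b w : α} (hnd : l.Nodup)
    (hl : l = l1 ++ b :: t) (hw : w ∈ l) (hlt : l.idxOf b < l.idxOf w) : w ∈ t := by
  subst hl
  have hbl1 : b ∉ l1 := by
    intro hb
    have := List.disjoint_of_nodup_append hnd
    exact this hb (List.mem_cons_self)
  rcases List.mem_append.1 hw with h | h
  · exfalso
    have h1 : List.idxOf w (l1 ++ b :: t) = List.idxOf w l1 :=
      List.idxOf_append_of_mem h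
    have h2 : List.idxOf b (l1 ++ b :: t) = l1.length + List.idxOf b (b :: t) :=
      List.idxOf_append_of_notMem hbl1
    rw [List.idxOf_cons_self] at h2
    have := List.idxOf_lt_length_iff.2 h
    omega
  · rcases List.mem_cons.1 h with h | h
    · subst h; omega
    · exact h

lemma indexOf_lt_of_mem_suffix {l l1 t : List α} {b w : α} (hnd : l.Nodup)
    (hl : l = l1 ++ b :: t) (hw : w ∈ t) : l.idxOf b < l.idxOf w := by
  subst hl
  have hbl1 : b ∉ l1 := fun hb =>
    (List.disjoint_of_nodup_append hnd) hb (List.mem_cons_self)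
  have hbt : b ∉ t := ((List.nodup_cons.1 (List.nodup_append.1 hnd).2.1).1)
  have hwb : w ≠ b := fun hc => hbt (hc ▸ hw)
  have hwl1 : w ∉ l1 := fun hw1 =>
    (List.disjoint_of_nodup_append hnd) hw1 (List.mem_cons.2 (Or.inr hw))
  rw [List.idxOf_append_of_notMem hbl1, List.idxOf_append_of_notMem hwl1,
    List.idxOf_cons_self, List.idxOf_cons_ne _ (fun h => hwb h.symm)]
  omega

end ListLemmas

namespace Inst

variable {V : Type*} [DecidableEq V] [Fintype V]

lemma pref_asymm {I : Inst V} {u v w : V} (h : I.pref u v w) : ¬ I.pref u w v := by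
  rintro ⟨_, _, h2⟩; have := h.2.2; omega

lemma pref_trans {I : Inst V} {u v w x : V} (h : I.pref u v w) (h' : I.pref u w x) :
    I.pref u v x := ⟨h.1, h'.2.1, lt_trans h.2.2 h'.2.2⟩

lemma pref_irrefl {I : Inst V} {u v : V} (h : I.pref u v v) : False := by
  have := h.2.2; omega

lemma pref_ne {I : Inst V} {u v w : V} (h : I.pref u v w) : v ≠ w := by
  rintro rfl; exact pref_irrefl h

lemma pref_total {I : Inst V} {u v w : V} (hnd : (I.plist u).Nodup) (hv : v ∈ I.plist u)
    (hw : w ∈ I.plist u) (hne : v ≠ w) : I.pref u v w ∨ I.pref u w v := by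
  have : (I.plist u).idxOf v ≠ (I.plist u).idxOf w := by
    intro h; exact hne ((List.idxOf_inj hv).1 h)
  rcases lt_or_gt_of_ne this with h | h
  · exact Or.inl ⟨hv, hw, h⟩
  · exact Or.inr ⟨hw, hv, h⟩

lemma prefOver_none {I : Inst V} {p : V → Option V} {u v : V} (h : p u = none) :
    I.PrefOver p u v := by
  unfold Inst.PrefOver; rw [h]; exact trivial

lemma prefOver_some_iff {I : Inst V} {p : V → Option V} {u v w : V} (h : p u = some w) :
    I.PrefOver p u v ↔ I.pref u v w := by
  unfold Inst.PrefOver; rw [h]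

lemma prefSit_some_iff {I : Inst V} {p : V → Option V} {u v w : V} (h : p u = some w) :
    I.PrefSit p u v ↔ I.pref u w v := by
  unfold Inst.PrefSit; rw [h]

lemma prefSit_none {I : Inst V} {p : V → Option V} {u v : V} (h : p u = none) :
    ¬ I.PrefSit p u v := by
  unfold Inst.PrefSit; rw [h]; exact not_false

lemma prefOver_congr {I : Inst V} {p q : V → Option V} {u v : V} (h : p u = q u) :
    I.PrefOver p u v ↔ I.PrefOver q u v := by
  unfold Inst.PrefOver; rw [h]

end Inst

end PopMatch

namespace PopMatch

namespace Inst

variable {V : Type*} [DecidableEq V] [Fintype V]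

/-- Weak validity (no totality of the bipartition). -/
def QuasiValid (J : Inst V) : Prop :=
  (∀ v, (J.plist v).Nodup) ∧
  (∀ u v, v ∈ J.plist u ↔ u ∈ J.plist v) ∧
  Disjoint J.A J.B ∧
  (∀ u v, v ∈ J.plist u → ((u ∈ J.A ∧ v ∈ J.B) ∨ (u ∈ J.B ∧ v ∈ J.A)))

lemma gsStep_eq_some {J : Inst V} {men : List V} {q : V → Option V} {r : V → List V}
    {st' : (V → Option V) × (V → List V)}
    (h : J.gsStep men (q, r) = some st') :
    ∃ a b rest, a ∈ men ∧ q a = none ∧ r a = b :: rest ∧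
      st'.2 = Function.update r a rest ∧
      ((q b = none ∧ st'.1 = Function.update (Function.update q a (some b)) b (some a)) ∨
       (∃ a', q b = some a' ∧ J.pref b a a' ∧
          st'.1 = Function.update (Function.update (Function.update q a' none) a (some b))
            b (some a)) ∨
       (∃ a', q b = some a' ∧ ¬ J.pref b a a' ∧ st'.1 = q)) := by
  unfold gsStep at h
  simp only at h
  split at h
  · exact absurd h (by simp)
  · rename_i a hf
    have hmem := List.mem_of_find?_eq_some hf
    have hcond' : q a = none ∧ r a ≠ [] := by
      have h2 := List.find?_some hf; simpa using h2
    split at h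
    · rename_i hr; exact absurd hr hcond'.2
    · rename_i b rest hr
      refine ⟨a, b, rest, hmem, hcond'.1, hr, ?_⟩
      split at h
      · rename_i hqb
        rw [Option.some_inj] at h
        subst h
        exact ⟨rfl, Or.inl ⟨hqb, rfl⟩⟩
      · rename_i a' hqb
        split at h
        · rename_i hpref
          rw [Option.some_inj] at h
          subst h
          exact ⟨rfl, Or.inr (Or.inl ⟨a', hqb, hpref, rfl⟩)⟩
        · rename_i hpref
          rw [Option.some_inj] at h
          subst h
          exact ⟨rfl, Or.inr (Or.inr ⟨a', hqb, hpref, rfl⟩)⟩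

lemma gsStep_terminal {J : Inst V} {men : List V} {q : V → Option V} {r : V → List V}
    (h : J.gsStep men (q, r) = none) :
    ∀ a ∈ men, q a = none → r a = [] := by
  intro a ha hq
  by_contra hne
  unfold gsStep at h
  simp only at h
  split at h
  · rename_i hf
    rw [List.find?_eq_none] at hf
    exact hf a ha (decide_eq_true ⟨hq, hne⟩)
  · rename_i a0 hf
    have hcond' : q a0 = none ∧ r a0 ≠ [] := by
      have h2 := List.find?_some hf; simpa using h2
    split at h
    · rename_i hr; exact absurd hr hcond'.2
    · rename_i b rest hr
      split at h
      · simp at h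
      · split at h <;> simp at h

lemma gsStep_measure {J : Inst V} {men : List V} {q : V → Option V} {r : V → List V}
    {st' : (V → Option V) × (V → List V)}
    (h : J.gsStep men (q, r) = some st') :
    ∑ v : V, (st'.2 v).length < ∑ v : V, (r v).length := by
  obtain ⟨a, b, rest, _, _, hra, hr2, _⟩ := gsStep_eq_some h
  have hpt : (fun v => ((Function.update r a rest) v).length)
      = Function.update (fun v => (r v).length) a rest.length := by
    funext j
    exact (Function.apply_update (fun _ l => l.length) r a rest j)
  rw [hr2]
  show ∑ v : V, ((Function.update r a rest) v).length < _
  rw [show (∑ v : V, ((Function.update r a rest) v).length)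
      = ∑ v : V, (Function.update (fun v => (r v).length) a rest.length) v from
    Finset.sum_congr rfl (fun x _ => congrFun hpt x)]
  rw [Finset.sum_update_of_mem (Finset.mem_univ a)]
  rw [Finset.sdiff_singleton_eq_erase,
    ← Finset.add_sum_erase _ (fun v => (r v).length) (Finset.mem_univ a), hra]
  simp

end Inst

end PopMatch

namespace PopMatch

namespace Inst

variable {V : Type*} [DecidableEq V] [Fintype V]

/-- The master invariant of the Gale–Shapley run. -/
structure GSInv (J : Inst V) (start res : V → Option V)
    (q : V → Option V) (r : V → List V) : Prop where
  sym : ∀ u v, q u = some v → q v = some u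
  madj : ∀ u v, q u = some v → J.adj u v
  suff : ∀ a, r a <:+ J.plist a
  passed : ∀ a b, a ∈ J.A → b ∈ J.plist a → b ∉ r a → q a ≠ some b →
      ∃ a', q b = some a' ∧ J.pref b a' a
  mtch : ∀ a b1, a ∈ J.A → q a = some b1 →
      (start a = some b1 ∧ r a = J.plist a) ∨ (∃ l1, J.plist a = l1 ++ b1 :: r a)
  mono : ∀ b a0, b ∈ J.B → start b = some a0 →
      ∃ a1, q b = some a1 ∧ (a1 = a0 ∨ J.pref b a1 a0)
  resv : ∀ a b0, a ∈ J.A → res a = some b0 →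
      b0 ∈ r a ∨ ∃ b1, q a = some b1 ∧ (b1 = b0 ∨ J.pref a b1 b0)

section Preserve

variable {J : Inst V} {men : List V} {start res : V → Option V}

lemma gsStep_preserves
    (hJnd : ∀ v, (J.plist v).Nodup)
    (hJsym : ∀ u v, v ∈ J.plist u ↔ u ∈ J.plist v)
    (hJdisj : Disjoint J.A J.B)
    (hJbip : ∀ u v, v ∈ J.plist u → ((u ∈ J.A ∧ v ∈ J.B) ∨ (u ∈ J.B ∧ v ∈ J.A)))
    (hmen : ∀ x, x ∈ men ↔ x ∈ J.A)
    (hres_sym : ∀ u w, res u = some w → res w = some u)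
    (hres_adj : ∀ u w, res u = some w → J.adj u w)
    (hres_start : ∀ u w, res u = some w → start u = none)
    (hres_key : ∀ b a, res b = some a → b ∈ J.B → ∀ x, J.adj b x → x ∈ J.A →
        J.pref b x a → ∃ bx, res x = some bx ∧ J.pref x bx b)
    {q : V → Option V} {r : V → List V} {st' : (V → Option V) × (V → List V)}
    (hinv : GSInv J start res q r)
    (h : J.gsStep men (q, r) = some st') :
    GSInv J start res st'.1 st'.2 := by
  obtain ⟨a, b, rest, hamen, hqa, hra, hr', hbr⟩ := gsStep_eq_some h
  have haA : a ∈ J.A := (hmen a).1 hamen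
  obtain ⟨l0, hl0⟩ := hinv.suff a
  rw [hra] at hl0
  have hbpl : b ∈ J.plist a := by
    rw [← hl0]; exact List.mem_append.2 (Or.inr (List.mem_cons_self))
  have hbB : b ∈ J.B := by
    rcases hJbip a b hbpl with ⟨_, hb⟩ | ⟨ha, _⟩
    · exact hb
    · exact absurd haA (Finset.disjoint_right.1 hJdisj ha)
  have hadj_ab : J.adj a b := ⟨hbpl, (hJsym a b).1 hbpl⟩
  have hab_ne : a ≠ b := fun hc => Finset.disjoint_left.1 hJdisj haA (hc ▸ hbB)
  have hfresh : ∀ u, q u ≠ some a := fun u hu => by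
    have := hinv.sym u a hu; rw [hqa] at this; exact nomatch this
  -- new r
  have hr'a : st'.2 a = rest := by rw [hr']; simp
  have hr'x : ∀ x, x ≠ a → st'.2 x = r x := by
    intro x hx; rw [hr']; exact Function.update_of_ne hx _ _
  have hsuff' : ∀ x, st'.2 x <:+ J.plist x := by
    intro x
    by_cases hx : x = a
    · subst hx; rw [hr'a]
      exact (List.suffix_cons b rest).trans ⟨l0, hl0⟩
    · rw [hr'x x hx]; exact hinv.suff x
  -- A ∩ B facts
  have hAneB : ∀ x y, x ∈ J.A → y ∈ J.B → x ≠ y := fun x y hx hy hc =>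
    Finset.disjoint_left.1 hJdisj hx (hc ▸ hy)
  rcases hbr with ⟨hqbn, hq1⟩ | ⟨a', hqb, hpba, hq1⟩ | ⟨a', hqb, hnpba, hq1⟩
  -- ========== Case 1 : b was free, accepts a ==========
  · have hq'a : st'.1 a = some b := by
      rw [hq1, Function.update_of_ne hab_ne, Function.update_self]
    have hq'b : st'.1 b = some a := by rw [hq1, Function.update_self]
    have hq'x : ∀ x, x ≠ a → x ≠ b → st'.1 x = q x := by
      intro x hxa hxb
      rw [hq1, Function.update_of_ne hxb, Function.update_of_ne hxa]
    have hfreshb : ∀ u, q u ≠ some b := fun u hu => by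
      have := hinv.sym u b hu; rw [hqbn] at this; exact nomatch this
    constructor
    · -- sym
      intro u v huv
      by_cases hua : u = a
      · subst hua; rw [hq'a] at huv; rw [← Option.some_inj.1 huv]; exact hq'b
      · by_cases hub : u = b
        · subst hub; rw [hq'b] at huv; rw [← Option.some_inj.1 huv]; exact hq'a
        · rw [hq'x u hua hub] at huv
          have hva : v ≠ a := fun hc => hfresh u (hc ▸ huv)
          have hvb : v ≠ b := fun hc => hfreshb u (hc ▸ huv)
          rw [hq'x v hva hvb]; exact hinv.sym u v huv
    · -- madj
      intro u v huv
      by_cases hua : u = a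
      · subst hua; rw [hq'a] at huv; rw [← Option.some_inj.1 huv]; exact hadj_ab
      · by_cases hub : u = b
        · subst hub; rw [hq'b] at huv; rw [← Option.some_inj.1 huv]
          exact ⟨hadj_ab.2, hadj_ab.1⟩
        · rw [hq'x u hua hub] at huv; exact hinv.madj u v huv
    · exact hsuff'
    · -- passed
      intro x w hxA hwpl hwr hqne
      have hxb : x ≠ b := hAneB x b hxA hbB
      have hwB : w ∈ J.B := by
        rcases hJbip x w hwpl with ⟨_, hw⟩ | ⟨hx, _⟩
        · exact hw
        · exact absurd hxA (Finset.disjoint_right.1 hJdisj hx)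
      have hwa : w ≠ a := (hAneB a w haA hwB).symm
      by_cases hxa : x = a
      · subst hxa
        rw [hr'a] at hwr
        by_cases hwb : w = b
        · subst hwb; exact absurd hq'a hqne
        · have hwro : w ∉ r x := by
            rw [hra]; intro hc
            rcases List.mem_cons.1 hc with hc | hc
            · exact hwb hc
            · exact hwr hc
          obtain ⟨a'', hqw, hpw⟩ := hinv.passed x w hxA hwpl hwro (by rw [hqa]; simp)
          refine ⟨a'', ?_, hpw⟩
          rw [hq'x w hwa hwb]; exact hqw
      · rw [hr'x x hxa] at hwr
        have hqxw : q x ≠ some w := by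
          rw [← hq'x x hxa hxb]; exact hqne
        obtain ⟨a'', hqw, hpw⟩ := hinv.passed x w hxA hwpl hwr hqxw
        by_cases hwb : w = b
        · subst hwb; rw [hqbn] at hqw; exact nomatch hqw
        · refine ⟨a'', ?_, hpw⟩; rw [hq'x w hwa hwb]; exact hqw
    · -- mtch
      intro x b1 hxA hq'xb
      by_cases hxa : x = a
      · subst hxa
        rw [hq'a] at hq'xb
        have hb1 : b1 = b := (Option.some_inj.1 hq'xb).symm
        subst hb1
        right; exact ⟨l0, by rw [← hl0, hr'a]⟩
      · have hxb : x ≠ b := hAneB x b hxA hbB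
        rw [hq'x x hxa hxb] at hq'xb
        rw [hr'x x hxa]
        exact hinv.mtch x b1 hxA hq'xb
    · -- mono
      intro w a0 hwB hst
      have hwa : w ≠ a := (hAneB a w haA hwB).symm
      by_cases hwb : w = b
      · subst hwb
        obtain ⟨a1, hqw, _⟩ := hinv.mono w a0 hwB hst
        rw [hqbn] at hqw; exact nomatch hqw
      · obtain ⟨a1, hqw, hor⟩ := hinv.mono w a0 hwB hst
        exact ⟨a1, by rw [hq'x w hwa hwb]; exact hqw, hor⟩
    · -- resv
      intro x b0 hxA hrx
      by_cases hxa : x = a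
      · subst hxa
        rcases hinv.resv x b0 hxA hrx with hb0 | ⟨b1, hqx, _⟩
        · rw [hra] at hb0
          by_cases hb0b : b0 = b
          · subst hb0b; right; exact ⟨b0, hq'a, Or.inl rfl⟩
          · left; rw [hr'a]
            rcases List.mem_cons.1 hb0 with hc | hc
            · exact absurd hc hb0b
            · exact hc
        · rw [hqa] at hqx; exact nomatch hqx
      · have hxb : x ≠ b := hAneB x b hxA hbB
        rw [hr'x x hxa, hq'x x hxa hxb]
        exact hinv.resv x b0 hxA hrx
  -- ========== Case 2 : b bumps a' and accepts a ==========
  · have hqa'b : q a' = some b := hinv.sym b a' hqb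
    have ha'A : a' ∈ J.A := by
      have hadj := hinv.madj b a' hqb
      rcases hJbip b a' hadj.1 with ⟨hb, _⟩ | ⟨_, ha'⟩
      · exact absurd hb (Finset.disjoint_right.1 hJdisj hbB)
      · exact ha'
    have ha'a : a' ≠ a := fun hc => by rw [hc, hqa] at hqa'b; exact nomatch hqa'b
    have ha'b : a' ≠ b := hAneB a' b ha'A hbB
    have hq'a : st'.1 a = some b := by
      rw [hq1, Function.update_of_ne hab_ne, Function.update_self]
    have hq'b : st'.1 b = some a := by rw [hq1, Function.update_self]
    have hq'a' : st'.1 a' = none := by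
      rw [hq1, Function.update_of_ne ha'b, Function.update_of_ne ha'a, Function.update_self]
    have hq'x : ∀ x, x ≠ a → x ≠ b → x ≠ a' → st'.1 x = q x := by
      intro x hxa hxb hxa'
      rw [hq1, Function.update_of_ne hxb, Function.update_of_ne hxa, Function.update_of_ne hxa']
    have hfreshb : ∀ u, u ≠ a' → q u ≠ some b := fun u hu hc => by
      have := hinv.sym u b hc
      rw [hqb] at this
      exact hu (Option.some_inj.1 this).symm
    constructor
    · -- sym
      intro u v huv
      by_cases hua : u = a
      · subst hua; rw [hq'a] at huv; rw [← Option.some_inj.1 huv]; exact hq'b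
      · by_cases hub : u = b
        · subst hub; rw [hq'b] at huv; rw [← Option.some_inj.1 huv]; exact hq'a
        · by_cases hua' : u = a'
          · subst hua'; rw [hq'a'] at huv; exact nomatch huv
          · rw [hq'x u hua hub hua'] at huv
            have hva : v ≠ a := fun hc => hfresh u (hc ▸ huv)
            have hvb : v ≠ b := fun hc => hfreshb u hua' (hc ▸ huv)
            have hva' : v ≠ a' := fun hc => by
              have := hinv.sym u v huv
              rw [hc, hqa'b] at this
              exact hub (Option.some_inj.1 this).symm
            rw [hq'x v hva hvb hva']; exact hinv.sym u v huv
    · -- madj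
      intro u v huv
      by_cases hua : u = a
      · subst hua; rw [hq'a] at huv; rw [← Option.some_inj.1 huv]; exact hadj_ab
      · by_cases hub : u = b
        · subst hub; rw [hq'b] at huv; rw [← Option.some_inj.1 huv]
          exact ⟨hadj_ab.2, hadj_ab.1⟩
        · by_cases hua' : u = a'
          · subst hua'; rw [hq'a'] at huv; exact nomatch huv
          · rw [hq'x u hua hub hua'] at huv; exact hinv.madj u v huv
    · exact hsuff'
    · -- passed
      intro x w hxA hwpl hwr hqne
      have hxb : x ≠ b := hAneB x b hxA hbB
      have hwB : w ∈ J.B := by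
        rcases hJbip x w hwpl with ⟨_, hw⟩ | ⟨hx, _⟩
        · exact hw
        · exact absurd hxA (Finset.disjoint_right.1 hJdisj hx)
      have hwa : w ≠ a := (hAneB a w haA hwB).symm
      have hwa' : w ≠ a' := (hAneB a' w ha'A hwB).symm
      by_cases hxa : x = a
      · subst hxa
        rw [hr'a] at hwr
        by_cases hwb : w = b
        · subst hwb; exact absurd hq'a hqne
        · have hwro : w ∉ r x := by
            rw [hra]; intro hc
            rcases List.mem_cons.1 hc with hc | hc
            · exact hwb hc
            · exact hwr hc
          obtain ⟨a'', hqw, hpw⟩ := hinv.passed x w hxA hwpl hwro (by rw [hqa]; simp)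
          refine ⟨a'', ?_, hpw⟩
          rw [hq'x w hwa hwb hwa']; exact hqw
      · by_cases hxa' : x = a'
        · subst hxa'
          rw [hr'x x ha'a] at hwr
          by_cases hwb : w = b
          · subst hwb; exact ⟨a, hq'b, hpba⟩
          · obtain ⟨a'', hqw, hpw⟩ := hinv.passed x w hxA hwpl hwr
              (by rw [hqa'b]; intro hc; exact hwb (Option.some_inj.1 hc).symm)
            refine ⟨a'', ?_, hpw⟩
            rw [hq'x w hwa hwb hwa']; exact hqw
        · rw [hr'x x hxa] at hwr
          have hqxw : q x ≠ some w := by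
            rw [← hq'x x hxa hxb hxa']; exact hqne
          obtain ⟨a'', hqw, hpw⟩ := hinv.passed x w hxA hwpl hwr hqxw
          by_cases hwb : w = b
          · subst hwb
            have ha''a' : a'' = a' := by
              rw [hqb] at hqw; exact (Option.some_inj.1 hqw).symm
            subst ha''a'
            exact ⟨a, hq'b, pref_trans hpba hpw⟩
          · refine ⟨a'', ?_, hpw⟩
            rw [hq'x w hwa hwb hwa']; exact hqw
    · -- mtch
      intro x b1 hxA hq'xb
      by_cases hxa : x = a
      · subst hxa
        rw [hq'a] at hq'xb
        have hb1 : b1 = b := (Option.some_inj.1 hq'xb).symm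
        subst hb1
        right; exact ⟨l0, by rw [← hl0, hr'a]⟩
      · by_cases hxa' : x = a'
        · subst hxa'; rw [hq'a'] at hq'xb; exact nomatch hq'xb
        · have hxb : x ≠ b := hAneB x b hxA hbB
          rw [hq'x x hxa hxb hxa'] at hq'xb
          rw [hr'x x hxa]
          exact hinv.mtch x b1 hxA hq'xb
    · -- mono
      intro w a0 hwB hst
      have hwa : w ≠ a := (hAneB a w haA hwB).symm
      have hwa' : w ≠ a' := (hAneB a' w ha'A hwB).symm
      by_cases hwb : w = b
      · subst hwb
        obtain ⟨a1, hqw, hor⟩ := hinv.mono w a0 hwB hst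
        have ha1 : a1 = a' := by
          rw [hqb] at hqw; exact (Option.some_inj.1 hqw).symm
        subst ha1
        refine ⟨a, hq'b, Or.inr ?_⟩
        rcases hor with h | h
        · exact h ▸ hpba
        · exact pref_trans hpba h
      · obtain ⟨a1, hqw, hor⟩ := hinv.mono w a0 hwB hst
        exact ⟨a1, by rw [hq'x w hwa hwb hwa']; exact hqw, hor⟩
    · -- resv
      intro x b0 hxA hrx
      by_cases hxa : x = a
      · subst hxa
        rcases hinv.resv x b0 hxA hrx with hb0 | ⟨b1, hqx, _⟩
        · rw [hra] at hb0
          by_cases hb0b : b0 = b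
          · subst hb0b; right; exact ⟨b0, hq'a, Or.inl rfl⟩
          · left; rw [hr'a]
            rcases List.mem_cons.1 hb0 with hc | hc
            · exact absurd hc hb0b
            · exact hc
        · rw [hqa] at hqx; exact nomatch hqx
      · by_cases hxa' : x = a'
        · subst hxa'
          rcases hinv.resv x b0 hxA hrx with hb0 | ⟨b1, hqx, hor⟩
          · left; rw [hr'x x ha'a]; exact hb0
          · have hb1 : b1 = b := by
              rw [hqa'b] at hqx; exact (Option.some_inj.1 hqx).symm
            rw [hb1] at hor hqx
            rcases hor with hbb0 | hpxb
            · -- b = b0 : x's reserve partner bumps him, impossible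
              exfalso
              have hresb : res b = some x := hres_sym x b (hbb0 ▸ hrx)
              obtain ⟨ba, hresa, hpaba⟩ :=
                hres_key b x hresb hbB a ⟨hadj_ab.2, hadj_ab.1⟩ haA hpba
              rcases hinv.resv a ba haA hresa with hba | ⟨b2, hq2, _⟩
              · rw [hra] at hba
                have hbab : ba ≠ b := pref_ne hpaba
                have hbarest : ba ∈ rest := by
                  rcases List.mem_cons.1 hba with hc | hc
                  · exact absurd hc hbab
                  · exact hc
                have := indexOf_lt_of_mem_suffix (hJnd a) hl0.symm hbarest
                have := hpaba.2.2
                omega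
              · rw [hqa] at hq2; exact nomatch hq2
            · -- x prefers b to b0; b0 is still on x's list
              left
              rw [hr'x x ha'a]
              rcases hinv.mtch x b hxA hqx with ⟨hst, _⟩ | ⟨l1, hsplit⟩
              · rw [hres_start x b0 hrx] at hst; exact nomatch hst
              · have hb0pl : b0 ∈ J.plist x := (hres_adj x b0 hrx).1
                exact mem_of_indexOf_gt (hJnd x) hsplit hb0pl hpxb.2.2
        · have hxb : x ≠ b := hAneB x b hxA hbB
          rw [hr'x x hxa, hq'x x hxa hxb hxa']
          exact hinv.resv x b0 hxA hrx
  -- ========== Case 3 : b rejects a ==========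
  · have hqa'b : q a' = some b := hinv.sym b a' hqb
    have ha'A : a' ∈ J.A := by
      have hadj := hinv.madj b a' hqb
      rcases hJbip b a' hadj.1 with ⟨hb, _⟩ | ⟨_, ha'⟩
      · exact absurd hb (Finset.disjoint_right.1 hJdisj hbB)
      · exact ha'
    have ha'a : a' ≠ a := fun hc => by rw [hc, hqa] at hqa'b; exact nomatch hqa'b
    have hpb : J.pref b a' a := by
      have hapl : a ∈ J.plist b := hadj_ab.2
      have ha'pl : a' ∈ J.plist b := (hinv.madj b a' hqb).1
      rcases pref_total (hJnd b) hapl ha'pl ha'a.symm with h | h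
      · exact absurd h hnpba
      · exact h
    constructor
    · intro u v huv; rw [hq1] at huv ⊢; exact hinv.sym u v huv
    · intro u v huv; rw [hq1] at huv; exact hinv.madj u v huv
    · exact hsuff'
    · -- passed
      intro x w hxA hwpl hwr hqne
      rw [hq1]
      by_cases hxa : x = a
      · subst hxa
        rw [hr'a] at hwr
        by_cases hwb : w = b
        · subst hwb; exact ⟨a', hqb, hpb⟩
        · have hwro : w ∉ r x := by
            rw [hra]; intro hc
            rcases List.mem_cons.1 hc with hc | hc
            · exact hwb hc
            · exact hwr hc
          exact hinv.passed x w hxA hwpl hwro (by rw [hqa]; simp)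
      · rw [hr'x x hxa] at hwr
        rw [hq1] at hqne
        exact hinv.passed x w hxA hwpl hwr hqne
    · -- mtch
      intro x b1 hxA hq'xb
      rw [hq1] at hq'xb
      by_cases hxa : x = a
      · subst hxa; rw [hqa] at hq'xb; exact nomatch hq'xb
      · rw [hr'x x hxa]
        exact hinv.mtch x b1 hxA hq'xb
    · intro w a0 hwB hst
      rw [hq1]
      exact hinv.mono w a0 hwB hst
    · -- resv
      intro x b0 hxA hrx
      rw [hq1]
      by_cases hxa : x = a
      · subst hxa
        rcases hinv.resv x b0 hxA hrx with hb0 | ⟨b1, hqx, _⟩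
        · rw [hra] at hb0
          rcases List.mem_cons.1 hb0 with hc | hc
          · -- b0 = b : b rejected her reserve partner, impossible
            exfalso
            subst hc
            have hresb : res b0 = some x := hres_sym x b0 hrx
            obtain ⟨bx, hresa', hpa'⟩ :=
              hres_key b0 x hresb hbB a' (hinv.madj b0 a' hqb) ha'A hpb
            rcases hinv.resv a' bx ha'A hresa' with hbx | ⟨b2, hq2, hor⟩
            · rcases hinv.mtch a' b0 ha'A hqa'b with ⟨hst, _⟩ | ⟨l1, hsplit⟩
              · rw [hres_start a' bx hresa'] at hst; exact nomatch hst
              · have := indexOf_lt_of_mem_suffix (hJnd a') hsplit hbx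
                have := hpa'.2.2
                omega
            · have hb2 : b2 = b0 := by
                rw [hqa'b] at hq2; exact (Option.some_inj.1 hq2).symm
              rw [hb2] at hor
              rcases hor with hc | hc
              · exact pref_ne hpa' hc.symm
              · exact pref_asymm hpa' hc
          · left; rw [hr'a]; exact hc
        · rw [hqa] at hqx; exact nomatch hqx
      · rw [hr'x x hxa]
        exact hinv.resv x b0 hxA hrx

end Preserve

end Inst

end PopMatch

namespace PopMatch

namespace Inst

variable {V : Type*} [DecidableEq V] [Fintype V]

section Run

variable {J : Inst V} {men : List V} {start res : V → Option V}

lemma GSInv_init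
    (hstart_sym : ∀ u v, start u = some v → start v = some u)
    (hstart_adj : ∀ u v, start u = some v → J.adj u v)
    (hres_adj : ∀ u w, res u = some w → J.adj u w) :
    GSInv J start res start (fun a => J.plist a) where
  sym := hstart_sym
  madj := hstart_adj
  suff := fun _ => List.suffix_refl _
  passed := fun _ b _ hb hnb _ => absurd hb hnb
  mtch := fun _ _ _ h => Or.inl ⟨h, rfl⟩
  mono := fun _ a0 _ h => ⟨a0, h, Or.inl rfl⟩
  resv := fun a b0 _ h => Or.inl ((hres_adj a b0 h).1)

lemma gsRun_preserves
    (hJnd : ∀ v, (J.plist v).Nodup)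
    (hJsym : ∀ u v, v ∈ J.plist u ↔ u ∈ J.plist v)
    (hJdisj : Disjoint J.A J.B)
    (hJbip : ∀ u v, v ∈ J.plist u → ((u ∈ J.A ∧ v ∈ J.B) ∨ (u ∈ J.B ∧ v ∈ J.A)))
    (hmen : ∀ x, x ∈ men ↔ x ∈ J.A)
    (hres_sym : ∀ u w, res u = some w → res w = some u)
    (hres_adj : ∀ u w, res u = some w → J.adj u w)
    (hres_start : ∀ u w, res u = some w → start u = none)
    (hres_key : ∀ b a, res b = some a → b ∈ J.B → ∀ x, J.adj b x → x ∈ J.A →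
        J.pref b x a → ∃ bx, res x = some bx ∧ J.pref x bx b) :
    ∀ (k : ℕ) (st : (V → Option V) × (V → List V)), GSInv J start res st.1 st.2 →
      GSInv J start res (J.gsRun men k st).1 (J.gsRun men k st).2 := by
  intro k
  induction k with
  | zero => intro st h; simpa [gsRun] using h
  | succ k ih =>
    intro st h
    rcases hs : J.gsStep men st with _ | st'
    · simpa [gsRun, hs] using h
    · have h' : GSInv J start res st'.1 st'.2 := by
        obtain ⟨q, r⟩ := st
        exact gsStep_preserves hJnd hJsym hJdisj hJbip hmen hres_sym hres_adj
          hres_start hres_key h hs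
      simpa [gsRun, hs] using ih st' h'

lemma gsRun_terminal :
    ∀ (k : ℕ) (st : (V → Option V) × (V → List V)),
      (∑ v : V, (st.2 v).length) < k → J.gsStep men (J.gsRun men k st) = none := by
  intro k
  induction k with
  | zero => intro st h; omega
  | succ k ih =>
    rintro ⟨q, r⟩ h
    rcases hs : J.gsStep men (q, r) with _ | st'
    · simpa [gsRun, hs] using hs
    · have hm : (∑ v : V, (st'.2 v).length) < k := by
        have h2 := gsStep_measure hs
        have h3 : (∑ v : V, (r v).length) < k + 1 := h
        omega
      simpa [gsRun, hs] using ih st' hm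

end Run

end Inst

end PopMatch
namespace PopMatch

open Inst in
/-- Let `M` (= `p`) be a popular matching with a witness `α`
such that `α_a + α_b = 0` on every edge of `M`.  Split `M = M₀ ∪ M₁` according
to the `α`-values, let `G₁` be the subinstance induced on the vertices of
nonzero `α`-value, and let `S` be the stable matching of `G₁` computed by the
Gale–Shapley algorithm started from the matching `M₁ ∩ (A₋₁ × B₁)`.  Then
`N = M₀ ∪ S` is a stable matching of `G`. -/
theorem transformed_matching_stable
    {V : Type*} [DecidableEq V] [Fintype V] (I : Inst V) (hI : I.IsValid)
    (p : V → Option V) (α : V → ℤ)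
    (hpop : I.Popular p) (hwit : I.IsWitness p α)
    (hedge : ∀ u v, p u = some v → α u + α v = 0) :
    letI A0 : Finset V := I.A.filter (fun u => α u = 0)
    letI B0 : Finset V := I.B.filter (fun u => α u = 0)
    letI Am1 : Finset V := I.A.filter (fun u => α u = -1)
    letI B1 : Finset V := I.B.filter (fun u => α u = 1)
    letI G1 : Inst V := I.induce ((I.A \ A0) ∪ (I.B \ B0))
    letI start : V → Option V := fun v =>
      match p v with
      | some w =>
          if (v ∈ Am1 ∧ w ∈ B1) ∨ (v ∈ B1 ∧ w ∈ Am1) then some w else none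
      | none => none
    letI S : V → Option V := G1.galeShapleyFrom start
    letI N : V → Option V := fun v => if v ∈ A0 ∪ B0 then p v else S v
    I.Stable N := by
  classical
  set A0 : Finset V := I.A.filter (fun u => α u = 0) with hA0def
  set B0 : Finset V := I.B.filter (fun u => α u = 0) with hB0def
  set Am1 : Finset V := I.A.filter (fun u => α u = -1) with hAm1def
  set B1 : Finset V := I.B.filter (fun u => α u = 1) with hB1def
  set Sset : Finset V := (I.A \ A0) ∪ (I.B \ B0) with hSsetdef
  set G1 : Inst V := I.induce Sset with hG1def
  set start : V → Option V := fun v =>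
      match p v with
      | some w =>
          if (v ∈ Am1 ∧ w ∈ B1) ∨ (v ∈ B1 ∧ w ∈ Am1) then some w else none
      | none => none
    with hstartdef
  set S : V → Option V := G1.galeShapleyFrom start with hSdef
  set N : V → Option V := fun v => if v ∈ A0 ∪ B0 then p v else S v with hNdef
  obtain ⟨hndI, hsymI, hdisj, htotal, hbip⟩ := hI
  obtain ⟨⟨hpsym, hpadj⟩, -⟩ := hpop
  obtain ⟨hα3, -, hwitE, hwitS⟩ := hwit
  -- elementary witness facts
  have F1 : ∀ u, p u = none → 0 ≤ α u := by
    intro u h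
    have h2 := hwitS u
    unfold Inst.wtSelf at h2
    rw [if_pos h] at h2
    exact h2
  have F2 : ∀ u v, I.adj u v → I.PrefOver p u v → I.PrefOver p v u →
      (2 : ℤ) ≤ α u + α v := by
    intro u v hadj h1 h2
    have h := hwitE u v hadj
    unfold Inst.wtE at h
    rw [if_pos ⟨h1, h2⟩] at h
    exact h
  have F3 : ∀ u v, I.adj u v → α u + α v ≤ -1 →
      I.PrefSit p u v ∧ I.PrefSit p v u := by
    intro u v hadj hle
    have h := hwitE u v hadj
    unfold Inst.wtE at h
    split_ifs at h with h1 h2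
    · omega
    · exact h2
    · omega
  -- membership facts
  have hmemS : ∀ u, u ∈ Sset ↔ (u ∈ I.A ∧ α u ≠ 0) ∨ (u ∈ I.B ∧ α u ≠ 0) := by
    intro u
    rw [hSsetdef, hA0def, hB0def]
    simp only [Finset.mem_union, Finset.mem_sdiff, Finset.mem_filter]
    tauto
  have hS_of_ne : ∀ u, α u ≠ 0 → u ∈ Sset := by
    intro u h
    rcases htotal u with hA | hB
    · exact (hmemS u).2 (Or.inl ⟨hA, h⟩)
    · exact (hmemS u).2 (Or.inr ⟨hB, h⟩)
  have hS_ne : ∀ u, u ∈ Sset → α u ≠ 0 := by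
    intro u h
    rcases (hmemS u).1 h with ⟨_, h⟩ | ⟨_, h⟩ <;> exact h
  -- G1 infrastructure
  have hplJ : ∀ v, G1.plist v
      = if v ∈ Sset then (I.plist v).filter (fun w => decide (w ∈ Sset)) else [] := by
    intro v; rw [hG1def]; rfl
  have hmemJ : ∀ v w, w ∈ G1.plist v ↔ v ∈ Sset ∧ w ∈ I.plist v ∧ w ∈ Sset := by
    intro v w
    rw [hplJ v]
    by_cases h : v ∈ Sset
    · rw [if_pos h]; simp [List.mem_filter, h]
    · rw [if_neg h]; simp [h]
  have hJA : ∀ u, u ∈ G1.A ↔ u ∈ I.A ∧ u ∈ Sset := by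
    intro u; rw [hG1def]; exact Finset.mem_inter
  have hJB : ∀ u, u ∈ G1.B ↔ u ∈ I.B ∧ u ∈ Sset := by
    intro u; rw [hG1def]; exact Finset.mem_inter
  have hndJ : ∀ v, (G1.plist v).Nodup := by
    intro v
    rw [hplJ v]
    split_ifs
    · exact (hndI v).filter _
    · exact List.nodup_nil
  have hsymJ : ∀ u v, v ∈ G1.plist u ↔ u ∈ G1.plist v := by
    intro u v
    rw [hmemJ, hmemJ]
    constructor
    · rintro ⟨h1, h2, h3⟩; exact ⟨h3, (hsymI u v).1 h2, h1⟩
    · rintro ⟨h1, h2, h3⟩; exact ⟨h3, (hsymI v u).1 h2, h1⟩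
  have hdisjJ : Disjoint G1.A G1.B := by
    rw [hG1def]
    exact hdisj.mono Finset.inter_subset_left Finset.inter_subset_left
  have hbipJ : ∀ u v, v ∈ G1.plist u →
      ((u ∈ G1.A ∧ v ∈ G1.B) ∨ (u ∈ G1.B ∧ v ∈ G1.A)) := by
    intro u v h
    obtain ⟨huS, hpl, hvS⟩ := (hmemJ u v).1 h
    rcases hbip u v hpl with ⟨hA, hB⟩ | ⟨hB, hA⟩
    · exact Or.inl ⟨(hJA u).2 ⟨hA, huS⟩, (hJB v).2 ⟨hB, hvS⟩⟩
    · exact Or.inr ⟨(hJB u).2 ⟨hB, huS⟩, (hJA v).2 ⟨hA, hvS⟩⟩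
  have hadjJ_of : ∀ u v, u ∈ Sset → v ∈ Sset → I.adj u v → G1.adj u v := by
    intro u v hu hv h
    exact ⟨(hmemJ u v).2 ⟨hu, h.1, hv⟩, (hmemJ v u).2 ⟨hv, h.2, hu⟩⟩
  have hadjI_of : ∀ u v, G1.adj u v → I.adj u v := by
    intro u v h
    exact ⟨((hmemJ u v).1 h.1).2.1, ((hmemJ v u).1 h.2).2.1⟩
  have hprefJ_iff : ∀ v b c, v ∈ Sset → b ∈ G1.plist v → c ∈ G1.plist v →
      (G1.pref v b c ↔ I.pref v b c) := by
    intro v b c hv hb hc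
    have hpl : G1.plist v = (I.plist v).filter (fun w => decide (w ∈ Sset)) := by
      rw [hplJ, if_pos hv]
    rw [hpl] at hb hc
    unfold Inst.pref
    rw [hpl]
    constructor
    · rintro ⟨hb', hc', hlt⟩
      exact ⟨List.mem_of_mem_filter hb, List.mem_of_mem_filter hc,
        (indexOf_filter_lt_iff _ _ (hndI v) b c hb hc).1 hlt⟩
    · rintro ⟨hb', hc', hlt⟩
      exact ⟨hb, hc, (indexOf_filter_lt_iff _ _ (hndI v) b c hb hc).2 hlt⟩
  -- start facts
  have hAm1mem : ∀ u, u ∈ Am1 ↔ u ∈ I.A ∧ α u = -1 := by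
    intro u; rw [hAm1def]; exact Finset.mem_filter
  have hB1mem : ∀ u, u ∈ B1 ↔ u ∈ I.B ∧ α u = 1 := by
    intro u; rw [hB1def]; exact Finset.mem_filter
  have hstart_eq : ∀ v w, start v = some w ↔
      p v = some w ∧ ((v ∈ Am1 ∧ w ∈ B1) ∨ (v ∈ B1 ∧ w ∈ Am1)) := by
    intro v w
    rw [hstartdef]
    rcases hp : p v with _ | w'
    · simp [hp]
    · simp only [hp]
      split_ifs with hc
      · constructor
        · intro h
          have hw : w' = w := Option.some_inj.1 h
          subst hw
          exact ⟨rfl, hc⟩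
        · exact fun h => h.1
      · constructor
        · intro h; simp at h
        · rintro ⟨h1, h2⟩
          have hw : w' = w := Option.some_inj.1 h1
          subst hw
          exact absurd h2 hc
  have hstart_matched : ∀ v w, start v = some w → p v = some w :=
    fun v w h => ((hstart_eq v w).1 h).1
  have hstart_sym : ∀ u v, start u = some v → start v = some u := by
    intro u v h
    rw [hstart_eq] at h ⊢
    obtain ⟨hp, hc⟩ := h
    refine ⟨hpsym u v hp, ?_⟩
    rcases hc with ⟨h1, h2⟩ | ⟨h1, h2⟩
    · exact Or.inr ⟨h2, h1⟩
    · exact Or.inl ⟨h2, h1⟩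
  have hstart_adjJ : ∀ u v, start u = some v → G1.adj u v := by
    intro u v h
    obtain ⟨hp, hc⟩ := (hstart_eq u v).1 h
    have hadj := hpadj u v hp
    apply hadjJ_of u v _ _ hadj
    · rcases hc with ⟨h1, _⟩ | ⟨h1, _⟩
      · exact hS_of_ne u (by have := ((hAm1mem u).1 h1).2; omega)
      · exact hS_of_ne u (by have := ((hB1mem u).1 h1).2; omega)
    · rcases hc with ⟨_, h1⟩ | ⟨_, h1⟩
      · exact hS_of_ne v (by have := ((hB1mem v).1 h1).2; omega)
      · exact hS_of_ne v (by have := ((hAm1mem v).1 h1).2; omega)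
  have hstartA1 : ∀ a, a ∈ I.A → α a = 1 → start a = none := by
    intro a hA h1
    rcases hs : start a with _ | w
    · rfl
    · exfalso
      rcases ((hstart_eq a w).1 hs).2 with ⟨hm, _⟩ | ⟨hm, _⟩
      · have := ((hAm1mem a).1 hm).2; omega
      · exact Finset.disjoint_left.1 hdisj hA ((hB1mem a).1 hm).1
  have hstartBm1 : ∀ b, b ∈ I.B → α b = -1 → start b = none := by
    intro b hB h1
    rcases hs : start b with _ | w
    · rfl
    · exfalso
      rcases ((hstart_eq b w).1 hs).2 with ⟨hm, _⟩ | ⟨hm, _⟩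
      · exact Finset.disjoint_left.1 hdisj ((hAm1mem b).1 hm).1 hB
      · have := ((hB1mem b).1 hm).2; omega
  have hstartAm1 : ∀ a w, a ∈ I.A → α a = -1 → p a = some w → start a = some w := by
    intro a w hA h1 hp
    have hwpl : w ∈ I.plist a := (hpadj a w hp).1
    have hwB : w ∈ I.B := by
      rcases hbip a w hwpl with ⟨_, h⟩ | ⟨h, _⟩
      · exact h
      · exact absurd h (Finset.disjoint_left.1 hdisj hA)
    have hw1 : α w = 1 := by have := hedge a w hp; omega
    exact (hstart_eq a w).2 ⟨hp, Or.inl ⟨(hAm1mem a).2 ⟨hA, h1⟩, (hB1mem w).2 ⟨hwB, hw1⟩⟩⟩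
  have hstartB1 : ∀ b w, b ∈ I.B → α b = 1 → p b = some w → start b = some w := by
    intro b w hB h1 hp
    have hwpl : w ∈ I.plist b := (hpadj b w hp).1
    have hwA : w ∈ I.A := by
      rcases hbip b w hwpl with ⟨h, _⟩ | ⟨_, h⟩
      · exact absurd hB (Finset.disjoint_left.1 hdisj h)
      · exact h
    have hwm : α w = -1 := by have := hedge b w hp; omega
    exact (hstart_eq b w).2 ⟨hp, Or.inr ⟨(hB1mem b).2 ⟨hB, h1⟩, (hAm1mem w).2 ⟨hwA, hwm⟩⟩⟩
  -- the reserved-partner map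
  set res : V → Option V := fun u =>
      if (u ∈ I.A ∧ α u = 1) ∨ (u ∈ I.B ∧ α u = -1) then p u else none
    with hresdef
  have hres_eq : ∀ u w, res u = some w ↔
      ((u ∈ I.A ∧ α u = 1) ∨ (u ∈ I.B ∧ α u = -1)) ∧ p u = some w := by
    intro u w
    rw [hresdef]
    simp only
    split_ifs with hc
    · simp [hc]
    · simp [hc]
  have hres_sym : ∀ u w, res u = some w → res w = some u := by
    intro u w h
    obtain ⟨hc, hp⟩ := (hres_eq u w).1 h
    have hwpl : w ∈ I.plist u := (hpadj u w hp).1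
    refine (hres_eq w u).2 ⟨?_, hpsym u w hp⟩
    rcases hc with ⟨hA, h1⟩ | ⟨hB, h1⟩
    · have hwB : w ∈ I.B := by
        rcases hbip u w hwpl with ⟨_, h2⟩ | ⟨h2, _⟩
        · exact h2
        · exact absurd h2 (Finset.disjoint_left.1 hdisj hA)
      exact Or.inr ⟨hwB, by have := hedge u w hp; omega⟩
    · have hwA : w ∈ I.A := by
        rcases hbip u w hwpl with ⟨h2, _⟩ | ⟨_, h2⟩
        · exact absurd hB (Finset.disjoint_left.1 hdisj h2)
        · exact h2
      exact Or.inl ⟨hwA, by have := hedge u w hp; omega⟩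
  have hres_start : ∀ u w, res u = some w → start u = none := by
    intro u w h
    obtain ⟨hc, hp⟩ := (hres_eq u w).1 h
    rcases hc with ⟨hA, h1⟩ | ⟨hB, h1⟩
    · exact hstartA1 u hA h1
    · exact hstartBm1 u hB h1
  have hres_adjJ : ∀ u w, res u = some w → G1.adj u w := by
    intro u w h
    obtain ⟨hc, hp⟩ := (hres_eq u w).1 h
    have hu : α u ≠ 0 := by rcases hc with ⟨_, h1⟩ | ⟨_, h1⟩ <;> omega
    have hw : α w ≠ 0 := by have := hedge u w hp; omega
    exact hadjJ_of u w (hS_of_ne u hu) (hS_of_ne w hw) (hpadj u w hp)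
  have hres_key : ∀ b a, res b = some a → b ∈ G1.B → ∀ x, G1.adj b x → x ∈ G1.A →
      G1.pref b x a → ∃ bx, res x = some bx ∧ G1.pref x bx b := by
    intro b a hres hbJB x hadjbx hxJA hpbxa
    obtain ⟨hbB, hbS⟩ := (hJB b).1 hbJB
    obtain ⟨hc, hpb⟩ := (hres_eq b a).1 hres
    have hbm1 : α b = -1 := by
      rcases hc with ⟨hbA, _⟩ | ⟨_, h1⟩
      · exact absurd hbB (Finset.disjoint_left.1 hdisj hbA)
      · exact h1
    obtain ⟨hxA, hxS⟩ := (hJA x).1 hxJA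
    have hIadjbx : I.adj b x := hadjI_of b x hadjbx
    have hIpbxa : I.pref b x a :=
      (hprefJ_iff b x a hbS hadjbx.1 (hres_adjJ b a hres).1).1 hpbxa
    rcases hα3 x with hx0 | hx1 | hxm1
    · exact absurd hx0 (hS_ne x hxS)
    · -- α x = 1
      have hPOb : I.PrefOver p b x := (prefOver_some_iff hpb).2 hIpbxa
      have hn : ¬ I.PrefOver p x b := by
        intro hc2
        have := F2 x b ⟨hIadjbx.2, hIadjbx.1⟩ hc2 hPOb
        omega
      rcases hpx : p x with _ | bx
      · exact absurd (prefOver_none hpx) hn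
      · have hnp : ¬ I.pref x b bx := fun hc2 => hn ((prefOver_some_iff hpx).2 hc2)
        have hbxpl : bx ∈ I.plist x := (hpadj x bx hpx).1
        have hbpl : b ∈ I.plist x := hIadjbx.2
        have hne2 : bx ≠ b := by
          rintro rfl
          have h2 := hpsym x bx hpx
          rw [hpb] at h2
          exact pref_ne hIpbxa (Option.some_inj.1 h2).symm
        have hpxbxb : I.pref x bx b := by
          rcases pref_total (hndI x) hbxpl hbpl hne2 with h | h
          · exact h
          · exact absurd h hnp
        refine ⟨bx, (hres_eq x bx).2 ⟨Or.inl ⟨hxA, hx1⟩, hpx⟩, ?_⟩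
        have hbxJ : bx ∈ G1.plist x :=
          (hres_adjJ x bx ((hres_eq x bx).2 ⟨Or.inl ⟨hxA, hx1⟩, hpx⟩)).1
        exact (hprefJ_iff x bx b hxS hbxJ hadjbx.2).2 hpxbxb
    · -- α x = -1 : contradiction with F3
      exfalso
      have hF := (F3 b x ⟨hIadjbx.1, hIadjbx.2⟩ (by omega)).1
      have : I.pref b a x := (prefSit_some_iff hpb).1 hF
      exact pref_asymm this hIpbxa
  -- run the algorithm
  set men : List V := G1.A.toList with hmendef
  set fuel : ℕ := (∑ v : V, (G1.plist v).length) + 1 with hfueldef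
  set st0 : (V → Option V) × (V → List V) := (start, fun a => G1.plist a) with hst0def
  set stF : (V → Option V) × (V → List V) := G1.gsRun men fuel st0 with hstFdef
  have hSeq : ∀ v, S v = stF.1 v := fun v => rfl
  have hmenJ : ∀ x, x ∈ men ↔ x ∈ G1.A := by
    intro x; rw [hmendef]; exact Finset.mem_toList
  have hInv : Inst.GSInv G1 start res stF.1 stF.2 := by
    rw [hstFdef]
    exact Inst.gsRun_preserves hndJ hsymJ hdisjJ hbipJ hmenJ hres_sym hres_adjJ
      hres_start hres_key fuel st0
      (Inst.GSInv_init hstart_sym hstart_adjJ hres_adjJ)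
  have hterm' : ∀ a, a ∈ G1.A → stF.1 a = none → stF.2 a = [] := by
    have hter : G1.gsStep men stF = none := by
      rw [hstFdef]
      exact Inst.gsRun_terminal fuel st0 (Nat.lt_succ_self _)
    intro a ha h0
    exact Inst.gsStep_terminal hter a ((hmenJ a).2 ha) h0
  -- values of N
  have hmem0 : ∀ v, v ∈ A0 ∪ B0 → α v = 0 := by
    intro v h
    rcases Finset.mem_union.1 h with h | h
    · rw [hA0def] at h; exact (Finset.mem_filter.1 h).2
    · rw [hB0def] at h; exact (Finset.mem_filter.1 h).2
  have hNP : ∀ v, α v = 0 → N v = p v := by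
    intro v h0
    rw [hNdef]
    simp only
    rw [if_pos]
    rcases htotal v with hA | hB
    · exact Finset.mem_union_left _ (by rw [hA0def]; exact Finset.mem_filter.2 ⟨hA, h0⟩)
    · exact Finset.mem_union_right _ (by rw [hB0def]; exact Finset.mem_filter.2 ⟨hB, h0⟩)
  have hNS : ∀ v, α v ≠ 0 → N v = S v := by
    intro v h0
    rw [hNdef]
    simp only
    rw [if_neg]
    exact fun hc => h0 (hmem0 v hc)
  -- N is a matching
  have hNsym : ∀ u v, N u = some v → N v = some u := by
    intro u v h
    by_cases h0 : α u = 0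
    · rw [hNP u h0] at h
      have hv0 : α v = 0 := by have := hedge u v h; omega
      rw [hNP v hv0]
      exact hpsym u v h
    · rw [hNS u h0, hSeq u] at h
      have hvS : v ∈ Sset := ((hmemJ u v).1 (hInv.madj u v h).1).2.2
      rw [hNS v (hS_ne v hvS), hSeq v]
      exact hInv.sym u v h
  have hNadj : ∀ u v, N u = some v → I.adj u v := by
    intro u v h
    by_cases h0 : α u = 0
    · rw [hNP u h0] at h
      exact hpadj u v h
    · rw [hNS u h0, hSeq u] at h
      exact hadjI_of u v (hInv.madj u v h)
  -- women with α = 1 end up at least as well as in p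
  have hBend : ∀ v u a0, v ∈ I.B → α v = 1 → p v = some a0 → I.pref v a0 u →
      I.PrefOver S v u → False := by
    intro v u a0 hvB hv1 hpv hpva0u hov
    have hvS : v ∈ Sset := hS_of_ne v (by omega)
    have hst : start v = some a0 := hstartB1 v a0 hvB hv1 hpv
    have hvJB : v ∈ G1.B := (hJB v).2 ⟨hvB, hvS⟩
    obtain ⟨a1, hSv, hor⟩ := hInv.mono v a0 hvJB hst
    have hSv' : S v = some a1 := by rw [hSeq]; exact hSv
    have hpvu : I.pref v u a1 := (prefOver_some_iff hSv').1 hov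
    rcases hor with rfl | hJp
    · exact pref_asymm hpva0u hpvu
    · have ha1pl : a1 ∈ G1.plist v := (hInv.madj v a1 hSv).1
      have ha0pl : a0 ∈ G1.plist v := (hstart_adjJ v a0 hst).1
      have hIpa1a0 : I.pref v a1 a0 := (hprefJ_iff v a1 a0 hvS ha1pl ha0pl).1 hJp
      exact pref_asymm (pref_trans hIpa1a0 hpva0u) hpvu
  -- the generic argument inside G1
  have hG1key : ∀ u v, u ∈ I.A → v ∈ I.B → α u ≠ 0 → α v ≠ 0 → I.adj u v →
      I.PrefOver S u v → I.PrefOver S v u →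
      (∀ b1, S u = some b1 → start u = some b1 → I.pref u v b1 → False) → False := by
    intro u v huA hvB hu0 hv0 hadj hou hov hesc
    have huS : u ∈ Sset := hS_of_ne u hu0
    have hvS : v ∈ Sset := hS_of_ne v hv0
    have huJA : u ∈ G1.A := (hJA u).2 ⟨huA, huS⟩
    have hadjJ : G1.adj u v := hadjJ_of u v huS hvS hadj
    have hend : ∀ a', stF.1 v = some a' → G1.pref v a' u → False := by
      intro a' hSv hJp
      have hIp : I.pref v a' u :=
        (hprefJ_iff v a' u hvS (hInv.madj v a' hSv).1 hadjJ.2).1 hJp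
      have hSv' : S v = some a' := by rw [hSeq]; exact hSv
      exact pref_asymm hIp ((prefOver_some_iff hSv').1 hov)
    rcases hSu : S u with _ | b1
    · have hSu' : stF.1 u = none := by rw [← hSeq]; exact hSu
      have hru : stF.2 u = [] := hterm' u huJA hSu'
      obtain ⟨a', hSv, hJp⟩ := hInv.passed u v huJA hadjJ.1 (by rw [hru]; simp)
        (by rw [hSu']; simp)
      exact hend a' hSv hJp
    · have hSu' : stF.1 u = some b1 := by rw [← hSeq]; exact hSu
      have hIpuv : I.pref u v b1 := (prefOver_some_iff hSu).1 hou
      rcases hInv.mtch u b1 huJA hSu' with ⟨hstu, _⟩ | ⟨l1, hsplit⟩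
      · exact hesc b1 hSu hstu hIpuv
      · have hb1pl : b1 ∈ G1.plist u := (hInv.madj u b1 hSu').1
        have hJpuv : G1.pref u v b1 := (hprefJ_iff u v b1 huS hadjJ.1 hb1pl).2 hIpuv
        have hvnr : v ∉ stF.2 u := by
          intro hc
          have h1 := indexOf_lt_of_mem_suffix (hndJ u) hsplit hc
          have h2 := hJpuv.2.2
          omega
        obtain ⟨a', hSv, hJp⟩ := hInv.passed u v huJA hadjJ.1 hvnr
          (by rw [hSu']; intro hc; exact pref_ne hIpuv (Option.some_inj.1 hc).symm)
        exact hend a' hSv hJp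
  -- the main case analysis
  have hkey : ∀ u v, u ∈ I.A → v ∈ I.B → I.adj u v →
      I.PrefOver N u v → I.PrefOver N v u → False := by
    intro u v huA hvB hadj hou hov
    rcases hα3 u with hu0 | hu1 | hum1
    · -- α u = 0
      have hou' : I.PrefOver p u v := (prefOver_congr (hNP u hu0)).1 hou
      rcases hα3 v with hv0 | hv1 | hvm1
      · have hov' : I.PrefOver p v u := (prefOver_congr (hNP v hv0)).1 hov
        have := F2 u v hadj hou' hov'
        omega
      · -- (0,1)
        have hov' : I.PrefOver S v u := (prefOver_congr (hNS v (by omega))).1 hov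
        have hn : ¬ I.PrefOver p v u := fun hc => by
          have := F2 u v hadj hou' hc; omega
        rcases hpv : p v with _ | a0
        · exact hn (prefOver_none hpv)
        · have ha0pl : a0 ∈ I.plist v := (hpadj v a0 hpv).1
          have hupl : u ∈ I.plist v := hadj.2
          have ha0u : a0 ≠ u := by
            rintro rfl
            have h2 := hpsym v a0 hpv
            exact pref_irrefl ((prefOver_some_iff h2).1 hou')
          have hpa0u : I.pref v a0 u := by
            rcases pref_total (hndI v) ha0pl hupl ha0u with h | h
            · exact h
            · exact absurd ((prefOver_some_iff hpv).2 h) hn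
          exact hBend v u a0 hvB hv1 hpv hpa0u hov'
      · -- (0,-1)
        have hsit := (F3 u v hadj (by omega)).1
        rcases hpu : p u with _ | w
        · exact prefSit_none hpu hsit
        · exact pref_asymm ((prefSit_some_iff hpu).1 hsit)
            ((prefOver_some_iff hpu).1 hou')
    · -- α u = 1
      have hou' : I.PrefOver S u v := (prefOver_congr (hNS u (by omega))).1 hou
      rcases hα3 v with hv0 | hv1 | hvm1
      · -- (1,0)
        have hov' : I.PrefOver p v u := (prefOver_congr (hNP v hv0)).1 hov
        have hnPuv : ¬ I.PrefOver p u v := fun hc => by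
          have := F2 u v hadj hc hov'; omega
        rcases hpu : p u with _ | b0
        · exact hnPuv (prefOver_none hpu)
        · have hb0pl : b0 ∈ I.plist u := (hpadj u b0 hpu).1
          have hvpl : v ∈ I.plist u := hadj.1
          by_cases hb0v : b0 = v
          · rw [hb0v] at hpu
            have h2 := hpsym u v hpu
            exact pref_irrefl ((prefOver_some_iff h2).1 hov')
          · have hpub0v : I.pref u b0 v := by
              rcases pref_total (hndI u) hb0pl hvpl hb0v with h | h
              · exact h
              · exact absurd ((prefOver_some_iff hpu).2 h) hnPuv
            have hresu : res u = some b0 := (hres_eq u b0).2 ⟨Or.inl ⟨huA, hu1⟩, hpu⟩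
            have huS : u ∈ Sset := hS_of_ne u (by omega)
            have huJA : u ∈ G1.A := (hJA u).2 ⟨huA, huS⟩
            rcases hSu : S u with _ | b1
            · have hSu' : stF.1 u = none := by rw [← hSeq]; exact hSu
              have hru : stF.2 u = [] := hterm' u huJA hSu'
              rcases hInv.resv u b0 huJA hresu with hmem | ⟨b1, hSu2, _⟩
              · rw [hru] at hmem; simp at hmem
              · rw [hSu'] at hSu2; exact nomatch hSu2
            · have hSu' : stF.1 u = some b1 := by rw [← hSeq]; exact hSu
              have hpuvb1 : I.pref u v b1 := (prefOver_some_iff hSu).1 hou'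
              have hb1plJ : b1 ∈ G1.plist u := (hInv.madj u b1 hSu').1
              have hb0plJ : b0 ∈ G1.plist u := (hres_adjJ u b0 hresu).1
              have hfin : I.pref u b1 v := by
                rcases hInv.resv u b0 huJA hresu with hmem | ⟨b1', hSu2, hor⟩
                · rcases hInv.mtch u b1 huJA hSu' with ⟨hst, _⟩ | ⟨l1, hsplit⟩
                  · rw [hstartA1 u huA hu1] at hst; exact nomatch hst
                  · have hlt := indexOf_lt_of_mem_suffix (hndJ u) hsplit hmem
                    have hJ : G1.pref u b1 b0 := ⟨hb1plJ, hb0plJ, hlt⟩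
                    exact pref_trans ((hprefJ_iff u b1 b0 huS hb1plJ hb0plJ).1 hJ) hpub0v
                · rw [hSu'] at hSu2
                  have hb1' : b1' = b1 := (Option.some_inj.1 hSu2).symm
                  rw [hb1'] at hor
                  rcases hor with h | h
                  · rw [h]; exact hpub0v
                  · exact pref_trans ((hprefJ_iff u b1 b0 huS hb1plJ hb0plJ).1 h) hpub0v
              exact pref_asymm hpuvb1 hfin
      · -- (1,1)
        have hov' : I.PrefOver S v u := (prefOver_congr (hNS v (by omega))).1 hov
        exact hG1key u v huA hvB (by omega) (by omega) hadj hou' hov'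
          (fun b1 _ hst _ => by
            rw [hstartA1 u huA hu1] at hst; exact nomatch hst)
      · -- (1,-1)
        have hov' : I.PrefOver S v u := (prefOver_congr (hNS v (by omega))).1 hov
        exact hG1key u v huA hvB (by omega) (by omega) hadj hou' hov'
          (fun b1 _ hst _ => by
            rw [hstartA1 u huA hu1] at hst; exact nomatch hst)
    · -- α u = -1
      have hou' : I.PrefOver S u v := (prefOver_congr (hNS u (by omega))).1 hou
      rcases hα3 v with hv0 | hv1 | hvm1
      · -- (-1,0)
        have hov' : I.PrefOver p v u := (prefOver_congr (hNP v hv0)).1 hov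
        have hsit := (F3 u v hadj (by omega)).2
        rcases hpv : p v with _ | a0
        · exact prefSit_none hpv hsit
        · exact pref_asymm ((prefSit_some_iff hpv).1 hsit)
            ((prefOver_some_iff hpv).1 hov')
      · -- (-1,1)
        have hov' : I.PrefOver S v u := (prefOver_congr (hNS v (by omega))).1 hov
        refine hG1key u v huA hvB (by omega) (by omega) hadj hou' hov' ?_
        intro b1 hSu hstu hIpuv
        have hpu : p u = some b1 := hstart_matched u b1 hstu
        have hPOuv : I.PrefOver p u v := (prefOver_some_iff hpu).2 hIpuv
        have hn : ¬ I.PrefOver p v u := fun hc => by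
          have := F2 u v hadj hPOuv hc; omega
        rcases hpv : p v with _ | a0
        · exact hn (prefOver_none hpv)
        · have ha0pl : a0 ∈ I.plist v := (hpadj v a0 hpv).1
          have hupl : u ∈ I.plist v := hadj.2
          have ha0u : a0 ≠ u := by
            rintro rfl
            have h2 := hpsym v a0 hpv
            rw [hpu] at h2
            exact pref_ne hIpuv (Option.some_inj.1 h2).symm
          have hpa0u : I.pref v a0 u := by
            rcases pref_total (hndI v) ha0pl hupl ha0u with h | h
            · exact h
            · exact absurd ((prefOver_some_iff hpv).2 h) hn
          exact hBend v u a0 hvB hv1 hpv hpa0u hov'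
      · -- (-1,-1)
        have hov' : I.PrefOver S v u := (prefOver_congr (hNS v (by omega))).1 hov
        refine hG1key u v huA hvB (by omega) (by omega) hadj hou' hov' ?_
        intro b1 hSu hstu hIpuv
        have hpu : p u = some b1 := hstart_matched u b1 hstu
        have hsit := (F3 u v hadj (by omega)).1
        exact pref_asymm ((prefSit_some_iff hpu).1 hsit) hIpuv
  -- assemble
  refine ⟨⟨hNsym, hNadj⟩, ?_⟩
  intro u v hblk
  obtain ⟨hadj, hne, hou, hov⟩ := hblk
  rcases hbip u v hadj.1 with ⟨huA, hvB⟩ | ⟨huB, hvA⟩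
  · exact hkey u v huA hvB hadj hou hov
  · exact hkey v u hvA huB ⟨hadj.2, hadj.1⟩ hov hou

end PopMatch
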